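/- There is a universal constant A ≥ 1 with the following property. Let μ be a probability measure on a measurable space Ω, let C ≥ 1, and let X : ℝ → Ω → ℝ be a family of measurable functions such that for every real p ≥ 2: (∫ |X 0|^p dμ)^{1/p} ≤ C·√p, and (∫ |X x − X y|^p dμ)^{1/p} ≤ C·√p·|x − y|^{1/2} for all x, y ∈ [0,1]. Let S(ω) := ⨆_{x ∈ D} |X x ω|, where D := {k/2^n | n ∈ ℕ, k ∈ ℕ, k ≤ 2^n} is the set of dyadic rationals in [0,1]. Then for every real p ≥ 2, ∫ S^p dμ ≤ (A·C)^p · p^{p/2}. -/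

import Mathlib

open MeasureTheory
open scoped ENNReal NNReal

lemma natSq (m : ℕ) : (m+1)^2 ≤ 2^(m+3) := by
  induction m with
  | zero => norm_num
  | succ n ih =>
    have h := Nat.lt_two_pow_self (n := n)
    have e2 : 2^(n+3) = 8*2^n := by ring
    have e3 : 2^(n+1+3) = 16*2^n := by ring
    have h1 : 1 ≤ 2^n := Nat.one_le_two_pow
    nlinarith [ih, h, e2, e3, h1]

lemma lyapunov {Ω : Type} [MeasurableSpace Ω] (μ : Measure Ω) [IsProbabilityMeasure μ]
    (f : Ω → ℝ≥0∞) (hf : AEMeasurable f μ) {p q : ℝ} (hp : 0 < p) (hpq : p ≤ q) :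
    (∫⁻ ω, f ω ^ p ∂μ) ^ (1/p : ℝ) ≤ (∫⁻ ω, f ω ^ q ∂μ) ^ (1/q : ℝ) := by
  rcases eq_or_lt_of_le hpq with rfl | hlt
  · rfl
  have hq : 0 < q := hp.trans hlt
  have ha : 1 < q / p := (one_lt_div hp).2 hlt
  have hab : (q/p).HolderConjugate (q/p).conjExponent := Real.HolderConjugate.conjExponent ha
  have h := ENNReal.lintegral_mul_le_Lp_mul_Lq μ hab (hf.pow_const p) aemeasurable_const
    (g := fun _ => (1:ℝ≥0∞))
  simp only [Pi.mul_apply, mul_one] at h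
  have hfq : ∀ ω : Ω, (f ω ^ p) ^ (q/p) = f ω ^ q := by
    intro ω
    rw [← ENNReal.rpow_mul]
    congr 1
    field_simp
  simp only [hfq, ENNReal.one_rpow, lintegral_one, measure_univ, mul_one] at h
  have h2 := ENNReal.rpow_le_rpow h (le_of_lt (one_div_pos.2 hp))
  rwa [← ENNReal.rpow_mul, show (1/(q/p)) * (1/p) = 1/q by field_simp] at h2

lemma minkowski_sum {Ω : Type} [MeasurableSpace Ω] (μ : Measure Ω)
    {p : ℝ} (hp : 1 ≤ p) (f : Ω → ℝ≥0∞) (g : ℕ → Ω → ℝ≥0∞)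
    (hf : Measurable f) (hg : ∀ m, Measurable (g m)) (N : ℕ) :
    (∫⁻ ω, (f ω + ∑ m ∈ Finset.range N, g m ω) ^ p ∂μ) ^ (1/p : ℝ) ≤
      (∫⁻ ω, f ω ^ p ∂μ) ^ (1/p : ℝ)
        + ∑ m ∈ Finset.range N, (∫⁻ ω, g m ω ^ p ∂μ) ^ (1/p : ℝ) := by
  induction N with
  | zero => simp
  | succ N ih =>
    have hsum : Measurable fun ω => f ω + ∑ m ∈ Finset.range N, g m ω :=
      hf.add (Finset.measurable_sum _ fun m _ => hg m)
    have step := ENNReal.lintegral_Lp_add_le (μ := μ)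
      (f := fun ω => f ω + ∑ m ∈ Finset.range N, g m ω) (g := g N)
      hsum.aemeasurable (hg N).aemeasurable hp
    simp only [Finset.sum_range_succ, ← add_assoc]
    calc (∫⁻ ω, ((f ω + ∑ m ∈ Finset.range N, g m ω) + g N ω) ^ p ∂μ) ^ (1/p : ℝ)
        ≤ (∫⁻ ω, (f ω + ∑ m ∈ Finset.range N, g m ω) ^ p ∂μ) ^ (1/p : ℝ)
          + (∫⁻ ω, g N ω ^ p ∂μ) ^ (1/p : ℝ) := step
      _ ≤ _ := by exact add_le_add_left ih _

/-- triangle inequality for `ENNReal.ofReal ∘ abs` -/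
lemma tri_ofReal (a b : ℝ) :
    ENNReal.ofReal |a| ≤ ENNReal.ofReal |b| + ENNReal.ofReal |a - b| := by
  refine le_trans (ENNReal.ofReal_le_ofReal ?_) (ENNReal.ofReal_add_le)
  calc |a| = |b + (a - b)| := by ring_nf
    _ ≤ |b| + |a - b| := abs_add_le _ _

/-- The set of dyadic rationals `k/2ⁿ` in `[0,1]`. -/
def dyadicSet : Set ℝ := {t : ℝ | ∃ n k : ℕ, k ≤ 2 ^ n ∧ t = (k : ℝ) / 2 ^ n}

/-- Dyadic chaining bound: sub-Gaussian moment bounds for a field and its increments on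
`[0,1]` yield moment bounds of order `p^{p/2}` for the supremum over dyadic points,
with a universal constant `A`. -/
theorem dyadic_chaining_sup_moment :
    ∃ A : ℝ, 1 ≤ A ∧
      ∀ (Ω : Type) [MeasurableSpace Ω] (μ : Measure Ω) [IsProbabilityMeasure μ]
        (C : ℝ), 1 ≤ C → ∀ X : ℝ → Ω → ℝ, (∀ x : ℝ, Measurable (X x)) →
        (∀ p : ℝ, 2 ≤ p →
          (∫⁻ ω, ENNReal.ofReal (|X 0 ω| ^ p) ∂μ) ^ (1 / p : ℝ)
            ≤ ENNReal.ofReal (C * Real.sqrt p)) →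
        (∀ p : ℝ, 2 ≤ p → ∀ x ∈ Set.Icc (0 : ℝ) 1, ∀ y ∈ Set.Icc (0 : ℝ) 1,
          (∫⁻ ω, ENNReal.ofReal (|X x ω - X y ω| ^ p) ∂μ) ^ (1 / p : ℝ)
            ≤ ENNReal.ofReal (C * Real.sqrt p * |x - y| ^ ((1 : ℝ) / 2))) →
        ∀ p : ℝ, 2 ≤ p →
          (∫⁻ ω, ENNReal.ofReal ((⨆ x ∈ dyadicSet, |X x ω|) ^ p) ∂μ)
            ≤ ENNReal.ofReal ((A * C) ^ p * p ^ (p / 2)) := by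
  refine ⟨34, by norm_num, ?_⟩
  intro Ω _ μ _ C hC X hX h0 hinc p hp
  have hp0 : 0 < p := lt_of_lt_of_le two_pos hp
  have hp1 : 1 ≤ p := le_trans one_le_two hp
  have hC0 : 0 < C := lt_of_lt_of_le one_pos hC
  set r : ℝ := (1/2 : ℝ) ^ ((1:ℝ)/4) with hr_def
  have hr0 : 0 ≤ r := Real.rpow_nonneg (by norm_num) _
  have hr4 : r ^ (4:ℕ) = 1/2 := by
    rw [hr_def, ← Real.rpow_natCast ((1/2:ℝ) ^ ((1:ℝ)/4)) 4, ← Real.rpow_mul (by norm_num)]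
    norm_num
  -- definitions
  set Z : ℕ → ℕ → Ω → ℝ≥0∞ := fun m j ω =>
    ENNReal.ofReal |X ((j:ℝ)/2^(m+1)) ω - X (((j/2 : ℕ):ℝ)/2^m) ω| with hZ_def
  set M : ℕ → Ω → ℝ≥0∞ := fun m ω => ⨆ j : Fin (2^(m+1)+1), Z m (j:ℕ) ω with hM_def
  set B : Ω → ℝ≥0∞ := fun ω =>
    ENNReal.ofReal |X 0 ω| + ENNReal.ofReal |X 1 ω - X 0 ω| with hB_def
  set T : ℕ → Ω → ℝ≥0∞ := fun N ω => B ω + ∑ m ∈ Finset.range N, M m ω with hT_def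
  have hZm : ∀ m j, Measurable (Z m j) := fun m j =>
    (((hX _).sub (hX _)).abs).ennreal_ofReal
  have hMm : ∀ m, Measurable (M m) := fun m => Measurable.iSup (fun j => hZm m j)
  have hBm : Measurable B :=
    ((hX 0).abs.ennreal_ofReal).add (((hX 1).sub (hX 0)).abs.ennreal_ofReal)
  have hTm : ∀ N, Measurable (T N) := fun N =>
    hBm.add (Finset.measurable_sum _ fun m _ => hMm m)
  -- chaining
  have key : ∀ (ω : Ω) (n k : ℕ), k ≤ 2^n →
      ENNReal.ofReal |X ((k:ℝ)/2^n) ω| ≤ T n ω := by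
    intro ω n
    induction n with
    | zero =>
      intro k hk
      interval_cases k
      · simpa [hT_def, hB_def] using
          (le_self_add : ENNReal.ofReal |X ((0:ℝ)) ω| ≤ _)
      · have tri := tri_ofReal (X 1 ω) (X 0 ω)
        simp [hT_def, hB_def] at tri ⊢; exact tri
    | succ n ih =>
      intro k hk
      have hk2 : k/2 ≤ 2^n := by
        have : k/2 ≤ 2^(n+1)/2 := Nat.div_le_div_right hk
        simpa [pow_succ, Nat.mul_div_cancel_left] using this
      have tri := tri_ofReal (X ((k:ℝ)/2^(n+1)) ω) (X (((k/2 : ℕ):ℝ)/2^n) ω)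
      have hZM : Z n k ω ≤ M n ω := by
        have := le_iSup (fun j : Fin (2^(n+1)+1) => Z n (j:ℕ) ω) ⟨k, by omega⟩
        simpa using this
      calc ENNReal.ofReal |X ((k:ℝ)/2^(n+1)) ω|
          ≤ ENNReal.ofReal |X (((k/2 : ℕ):ℝ)/2^n) ω| + Z n k ω := tri
        _ ≤ T n ω + M n ω := add_le_add (ih _ hk2) hZM
        _ = T (n+1) ω := by
            simp only [hT_def, Finset.sum_range_succ, add_assoc]
  -- monotonicity of T in N
  have hTmono : ∀ ω : Ω, Monotone fun N => T N ω := by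
    intro ω N N' h
    exact add_le_add le_rfl (Finset.sum_le_sum_of_subset (Finset.range_subset_range.2 h))
  -- pointwise bound of the dyadic sup
  have hSle : ∀ ω : Ω, ENNReal.ofReal ((⨆ x ∈ dyadicSet, |X x ω|) ^ p)
      ≤ ⨆ N, (T N ω) ^ p := by
    intro ω
    have hS0 : 0 ≤ ⨆ x ∈ dyadicSet, |X x ω| :=
      Real.iSup_nonneg fun x => Real.iSup_nonneg fun _ => abs_nonneg _
    rw [← ENNReal.ofReal_rpow_of_nonneg hS0 hp0.le]
    have h1 : ENNReal.ofReal (⨆ x ∈ dyadicSet, |X x ω|) ≤ ⨆ N, T N ω := by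
      rcases eq_top_or_lt_top (⨆ N, T N ω) with hL | hL
      · rw [hL]; exact le_top
      · have hle : (⨆ x ∈ dyadicSet, |X x ω|) ≤ (⨆ N, T N ω).toReal := by
          refine Real.iSup_le (fun x => Real.iSup_le (fun hx => ?_) ENNReal.toReal_nonneg)
            ENNReal.toReal_nonneg
          obtain ⟨n, k, hk, rfl⟩ := hx
          have h2 : ENNReal.ofReal |X ((k:ℝ)/2^n) ω| ≤ ⨆ N, T N ω :=
            (key ω n k hk).trans (le_iSup (fun N => T N ω) n)
          exact (ENNReal.ofReal_le_iff_le_toReal hL.ne).1 h2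
        calc ENNReal.ofReal (⨆ x ∈ dyadicSet, |X x ω|)
            ≤ ENNReal.ofReal (⨆ N, T N ω).toReal := ENNReal.ofReal_le_ofReal hle
          _ = ⨆ N, T N ω := ENNReal.ofReal_toReal hL.ne
    calc (ENNReal.ofReal (⨆ x ∈ dyadicSet, |X x ω|)) ^ p
        ≤ (⨆ N, T N ω) ^ p := ENNReal.rpow_le_rpow h1 hp0.le
      _ = ⨆ N, (T N ω) ^ p := by
          have h := OrderIso.map_iSup (ENNReal.orderIsoRpow p hp0) (fun N => T N ω)
          simp only [ENNReal.orderIsoRpow_apply] at h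
          exact h
  -- per-level L^p bound
  have hM_bound : ∀ m : ℕ,
      (∫⁻ ω, M m ω ^ p ∂μ) ^ (1/p : ℝ) ≤ ENNReal.ofReal (4*C*Real.sqrt p * r^m) := by
    intro m
    set q : ℝ := p * ((m:ℝ)+1) with hq_def
    have hm1 : (1:ℝ) ≤ (m:ℝ)+1 := by
      have := Nat.cast_nonneg (α := ℝ) m
      linarith
    have hq2 : 2 ≤ q := by nlinarith
    have hq0 : 0 < q := lt_of_lt_of_le two_pos hq2
    have hpq : p ≤ q := by nlinarith
    set u : ℝ := ((1/2:ℝ)^(m+1)) ^ ((1:ℝ)/2) with hu_def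
    have hu0 : 0 ≤ u := Real.rpow_nonneg (by positivity) _
    have step1 : (∫⁻ ω, M m ω ^ p ∂μ) ^ (1/p:ℝ) ≤ (∫⁻ ω, M m ω ^ q ∂μ) ^ (1/q:ℝ) :=
      lyapunov μ _ (hMm m).aemeasurable hp0 hpq
    have step2 : ∀ ω : Ω, M m ω ^ q ≤ ∑ j ∈ Finset.range (2^(m+1)+1), Z m j ω ^ q := by
      intro ω
      haveI : NeZero (2^(m+1)+1) := ⟨by positivity⟩
      obtain ⟨j0, hj0⟩ := Finite.exists_max (fun j : Fin (2^(m+1)+1) => Z m (j:ℕ) ω)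
      have hMe : M m ω = Z m (j0:ℕ) ω := by
        simp only [hM_def]
        exact le_antisymm (iSup_le hj0) (le_iSup (fun j : Fin (2^(m+1)+1) => Z m (j:ℕ) ω) j0)
      rw [hMe]
      exact Finset.single_le_sum (f := fun j => Z m j ω ^ q) (fun j _ => zero_le)
        (Finset.mem_range.2 j0.isLt)
    have step3 : (∫⁻ ω, M m ω ^ q ∂μ)
        ≤ ∑ j ∈ Finset.range (2^(m+1)+1), ∫⁻ ω, Z m j ω ^ q ∂μ := by
      refine le_trans (lintegral_mono step2) (le_of_eq ?_)
      exact lintegral_finset_sum _ (fun j _ => (hZm m j).pow_const q)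
    have step4 : ∀ j ∈ Finset.range (2^(m+1)+1),
        (∫⁻ ω, Z m j ω ^ q ∂μ) ≤ (ENNReal.ofReal (C*Real.sqrt q*u)) ^ q := by
      intro j hjr
      rw [Finset.mem_range] at hjr
      have hj' : j ≤ 2^(m+1) := by omega
      have hj2 : j/2 ≤ 2^m := by
        have h1 : j/2 ≤ 2^(m+1)/2 := Nat.div_le_div_right hj'
        have h2 : 2^(m+1)/2 = 2^m := by
          rw [pow_succ, Nat.mul_div_cancel _ (by norm_num)]
        omega
      have hx : ((j:ℝ)/2^(m+1)) ∈ Set.Icc (0:ℝ) 1 := by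
        constructor
        · positivity
        · rw [div_le_one (by positivity)]
          exact_mod_cast Nat.cast_le.2 hj'
      have hy : (((j/2:ℕ):ℝ)/2^m) ∈ Set.Icc (0:ℝ) 1 := by
        constructor
        · positivity
        · rw [div_le_one (by positivity)]
          exact_mod_cast Nat.cast_le.2 hj2
      have habs : |(j:ℝ)/2^(m+1) - ((j/2:ℕ):ℝ)/2^m| ≤ (1/2:ℝ)^(m+1) := by
        have hdiv : (j:ℝ) = 2*((j/2:ℕ):ℝ) + ((j%2:ℕ):ℝ) := by
          exact_mod_cast (Nat.div_add_mod j 2).symm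
        have e : (j:ℝ)/2^(m+1) - ((j/2:ℕ):ℝ)/2^m = ((j%2:ℕ):ℝ)/2^(m+1) := by
          rw [hdiv, pow_succ]
          field_simp
          ring
        rw [e, abs_of_nonneg (by positivity)]
        have hmod : ((j%2:ℕ):ℝ) ≤ 1 := by
          exact_mod_cast Nat.le_of_lt_succ (Nat.mod_lt j (by norm_num))
        calc ((j%2:ℕ):ℝ)/2^(m+1) ≤ 1/2^(m+1) := by gcongr
          _ = (1/2:ℝ)^(m+1) := by rw [one_div_pow]
      have hrp : |(j:ℝ)/2^(m+1) - ((j/2:ℕ):ℝ)/2^m| ^ ((1:ℝ)/2) ≤ u := by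
        rw [hu_def]
        exact Real.rpow_le_rpow (abs_nonneg _) habs (by norm_num)
      have t := hinc q hq2 _ hx _ hy
      have conv : (∫⁻ ω, Z m j ω ^ q ∂μ)
          = ∫⁻ ω, ENNReal.ofReal (|X ((j:ℝ)/2^(m+1)) ω - X (((j/2:ℕ):ℝ)/2^m) ω| ^ q) ∂μ :=
        lintegral_congr fun ω => by
          rw [hZ_def]
          exact ENNReal.ofReal_rpow_of_nonneg (abs_nonneg _) hq0.le
      have t2 : (∫⁻ ω, Z m j ω ^ q ∂μ)^(1/q:ℝ) ≤ ENNReal.ofReal (C*Real.sqrt q*u) := by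
        rw [conv]
        refine le_trans t (ENNReal.ofReal_le_ofReal ?_)
        exact mul_le_mul_of_nonneg_left hrp (by positivity)
      have t3 := ENNReal.rpow_le_rpow t2 hq0.le
      rwa [← ENNReal.rpow_mul, one_div, inv_mul_cancel₀ hq0.ne', ENNReal.rpow_one] at t3
    have step5 : (∫⁻ ω, M m ω ^ q ∂μ)
        ≤ ((2^(m+1)+1 : ℕ) : ℝ≥0∞) * (ENNReal.ofReal (C*Real.sqrt q*u)) ^ q := by
      calc (∫⁻ ω, M m ω ^ q ∂μ)
          ≤ ∑ j ∈ Finset.range (2^(m+1)+1), ∫⁻ ω, Z m j ω ^ q ∂μ := step3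
        _ ≤ ∑ _j ∈ Finset.range (2^(m+1)+1), (ENNReal.ofReal (C*Real.sqrt q*u)) ^ q :=
            Finset.sum_le_sum step4
        _ = _ := by simp [Finset.sum_const, Finset.card_range, nsmul_eq_mul]
    have step6 : (∫⁻ ω, M m ω ^ q ∂μ)^(1/q:ℝ)
        ≤ ((2^(m+1)+1 : ℕ) : ℝ≥0∞)^(1/q:ℝ) * ENNReal.ofReal (C*Real.sqrt q*u) := by
      have h := ENNReal.rpow_le_rpow step5 (le_of_lt (one_div_pos.2 hq0))
      rwa [ENNReal.mul_rpow_of_nonneg _ _ (le_of_lt (one_div_pos.2 hq0)),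
        ← ENNReal.rpow_mul, mul_one_div, div_self hq0.ne', ENNReal.rpow_one] at h
    have step7 : ((2^(m+1)+1 : ℕ) : ℝ≥0∞)^(1/q:ℝ) ≤ 2 := by
      have hnat2 : (2^(m+1)+1 : ℕ) ≤ 2^(m+2) := by
        have h1 : 1 ≤ 2^(m+1) := Nat.one_le_two_pow
        have h2 : (2:ℕ)^(m+2) = 2*2^(m+1) := by ring
        omega
      have hle : ((2^(m+1)+1 : ℕ) : ℝ≥0∞) ≤ (2:ℝ≥0∞)^(((m+2:ℕ)):ℝ) := by
        rw [ENNReal.rpow_natCast]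
        exact_mod_cast Nat.cast_le.2 hnat2
      calc ((2^(m+1)+1 : ℕ) : ℝ≥0∞)^(1/q:ℝ)
          ≤ ((2:ℝ≥0∞)^(((m+2:ℕ)):ℝ))^(1/q:ℝ) := ENNReal.rpow_le_rpow hle (by positivity)
        _ = (2:ℝ≥0∞)^((((m+2:ℕ)):ℝ)*(1/q)) := by rw [← ENNReal.rpow_mul]
        _ ≤ (2:ℝ≥0∞)^(1:ℝ) := by
            apply ENNReal.rpow_le_rpow_of_exponent_le (by norm_num)
            rw [mul_one_div, div_le_one hq0]
            push_cast
            nlinarith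
        _ = 2 := ENNReal.rpow_one 2
    have step9 : 2*(C*Real.sqrt q*u) ≤ 4*C*Real.sqrt p * r^m := by
      have hsq : Real.sqrt q = Real.sqrt p * Real.sqrt ((m:ℝ)+1) := by
        rw [hq_def, Real.sqrt_mul hp0.le]
      have h9 : Real.sqrt ((m:ℝ)+1) * u ≤ 2 * r^m := by
        apply le_of_pow_le_pow_left₀ (by norm_num : (4:ℕ) ≠ 0) (by positivity)
        have e1 : (Real.sqrt ((m:ℝ)+1))^(4:ℕ) = ((m:ℝ)+1)^(2:ℕ) := by
          rw [show (4:ℕ) = 2*2 from rfl, pow_mul, Real.sq_sqrt (by positivity)]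
        have e2 : u^(4:ℕ) = ((1/2:ℝ)^(m+1))^(2:ℕ) := by
          rw [hu_def, ← Real.rpow_natCast (((1/2:ℝ)^(m+1)) ^ ((1:ℝ)/2)) 4,
            ← Real.rpow_mul (by positivity)]
          norm_num
        have e3 : (r^m)^(4:ℕ) = (1/2:ℝ)^m := by
          rw [← pow_mul, hr_def, ← Real.rpow_natCast ((1/2:ℝ)^((1:ℝ)/4)) (m*4),
            ← Real.rpow_mul (by norm_num)]
          push_cast
          rw [show (1:ℝ)/4*((m:ℝ)*4) = (m:ℝ) by ring, Real.rpow_natCast]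
        have ht : (0:ℝ) < (1/2:ℝ)^m := by positivity
        have hts : (2:ℝ)^m * (1/2:ℝ)^m = 1 := by
          rw [← mul_pow]
          norm_num
        have e4 : ((1/2:ℝ)^(m+1))^(2:ℕ) = (1/2:ℝ)^m * (1/2:ℝ)^m * (1/4) := by
          rw [pow_succ]
          ring
        have hnat' : ((m:ℝ)+1)^(2:ℕ) ≤ 8 * 2^m := by
          have hnat : ((m:ℝ)+1)^(2:ℕ) ≤ (2:ℝ)^(m+3) := by exact_mod_cast natSq m
          calc ((m:ℝ)+1)^(2:ℕ) ≤ (2:ℝ)^(m+3) := hnat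
            _ = 8*2^m := by rw [pow_add]; ring
        calc (Real.sqrt ((m:ℝ)+1) * u)^(4:ℕ)
            = ((m:ℝ)+1)^(2:ℕ) * ((1/2:ℝ)^(m+1))^(2:ℕ) := by rw [mul_pow, e1, e2]
          _ = (((m:ℝ)+1)^(2:ℕ) * (1/2:ℝ)^m) * ((1/2:ℝ)^m * (1/4)) := by rw [e4]; ring
          _ ≤ ((8 * 2^m) * (1/2:ℝ)^m) * ((1/2:ℝ)^m * (1/4)) := by
              apply mul_le_mul_of_nonneg_right _ (by positivity)
              exact mul_le_mul_of_nonneg_right hnat' ht.le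
          _ = 8 * ((2:ℝ)^m * (1/2:ℝ)^m) * ((1/2:ℝ)^m * (1/4)) := by ring
          _ = 2 * (1/2:ℝ)^m := by rw [hts]; ring
          _ ≤ 16 * (1/2:ℝ)^m := by nlinarith [ht]
          _ = (2*r^m)^(4:ℕ) := by rw [mul_pow, e3]; norm_num
      calc 2*(C*Real.sqrt q*u) = 2*C*Real.sqrt p * (Real.sqrt ((m:ℝ)+1) * u) := by
            rw [hsq]; ring
        _ ≤ 2*C*Real.sqrt p * (2*r^m) := by
            apply mul_le_mul_of_nonneg_left h9 (by positivity)
        _ = 4*C*Real.sqrt p * r^m := by ring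
    calc (∫⁻ ω, M m ω ^ p ∂μ)^(1/p:ℝ)
        ≤ (∫⁻ ω, M m ω ^ q ∂μ)^(1/q:ℝ) := step1
      _ ≤ ((2^(m+1)+1 : ℕ) : ℝ≥0∞)^(1/q:ℝ) * ENNReal.ofReal (C*Real.sqrt q*u) := step6
      _ ≤ 2 * ENNReal.ofReal (C*Real.sqrt q*u) := mul_le_mul_left step7 _
      _ = ENNReal.ofReal (2*(C*Real.sqrt q*u)) := by
          rw [ENNReal.ofReal_mul (by norm_num : (0:ℝ) ≤ 2), ENNReal.ofReal_ofNat]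
      _ ≤ ENNReal.ofReal (4*C*Real.sqrt p * r^m) := ENNReal.ofReal_le_ofReal step9
  -- bound for the base term
  have hB_bound : (∫⁻ ω, B ω ^ p ∂μ) ^ (1/p : ℝ)
      ≤ ENNReal.ofReal (C*Real.sqrt p) + ENNReal.ofReal (C*Real.sqrt p) := by
    have step := ENNReal.lintegral_Lp_add_le (μ := μ)
      (f := fun ω => ENNReal.ofReal |X 0 ω|) (g := fun ω => ENNReal.ofReal |X 1 ω - X 0 ω|)
      ((hX 0).abs.ennreal_ofReal).aemeasurable
      (((hX 1).sub (hX 0)).abs.ennreal_ofReal).aemeasurable hp1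
    simp only [Pi.add_apply] at step
    have conv0 : (∫⁻ ω, (ENNReal.ofReal |X 0 ω|) ^ p ∂μ)
        = ∫⁻ ω, ENNReal.ofReal (|X 0 ω| ^ p) ∂μ :=
      lintegral_congr fun ω => ENNReal.ofReal_rpow_of_nonneg (abs_nonneg _) hp0.le
    have conv1 : (∫⁻ ω, (ENNReal.ofReal |X 1 ω - X 0 ω|) ^ p ∂μ)
        = ∫⁻ ω, ENNReal.ofReal (|X 1 ω - X 0 ω| ^ p) ∂μ :=
      lintegral_congr fun ω => ENNReal.ofReal_rpow_of_nonneg (abs_nonneg _) hp0.le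
    rw [conv0, conv1] at step
    have t0 := h0 p hp
    have t1 := hinc p hp 1 (by norm_num) 0 (by norm_num)
    norm_num [one_div] at t1
    simp only [one_div] at step t0 ⊢
    rw [hB_def]
    exact le_trans step (add_le_add t0 t1)
  -- geometric sum bound
  have hr1 : r < 1 := Real.rpow_lt_one (by norm_num) (by norm_num) (by norm_num)
  have hgeom : ∀ N : ℕ, ∑ m ∈ Finset.range N, (4*C*Real.sqrt p * r^m) ≤ 32*C*Real.sqrt p := by
    intro N
    have hr78 : r ≤ 7/8 := by
      apply le_of_pow_le_pow_left₀ (by norm_num : (4:ℕ) ≠ 0) (by norm_num)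
      rw [hr4]; norm_num
    have hsummable : Summable fun m : ℕ => r ^ m := summable_geometric_of_lt_one hr0 hr1
    have h1 : ∑ m ∈ Finset.range N, r^m ≤ ∑' m : ℕ, r^m :=
      hsummable.sum_le_tsum _ (fun m _ => by positivity)
    rw [tsum_geometric_of_lt_one hr0 hr1] at h1
    have h2 : (1 - r)⁻¹ ≤ 8 := by
      have h3 : (8:ℝ)⁻¹ ≤ 1 - r := by linarith
      calc (1-r)⁻¹ ≤ ((8:ℝ)⁻¹)⁻¹ := inv_anti₀ (by norm_num) h3
        _ = 8 := by norm_num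
    have hsum8 : ∑ m ∈ Finset.range N, r^m ≤ 8 := le_trans h1 h2
    calc ∑ m ∈ Finset.range N, (4*C*Real.sqrt p * r^m)
        = 4*C*Real.sqrt p * ∑ m ∈ Finset.range N, r^m := by rw [Finset.mul_sum]
      _ ≤ 4*C*Real.sqrt p * 8 := by
          apply mul_le_mul_of_nonneg_left hsum8 (by positivity)
      _ = 32*C*Real.sqrt p := by ring
  -- combining: uniform L^p bound for T N
  have normT : ∀ N : ℕ, (∫⁻ ω, T N ω ^ p ∂μ) ^ (1/p : ℝ)
      ≤ ENNReal.ofReal (34*C*Real.sqrt p) := by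
    intro N
    have h1 := minkowski_sum μ hp1 B M hBm hMm N
    have h2 : ∑ m ∈ Finset.range N, (∫⁻ ω, M m ω ^ p ∂μ) ^ (1/p : ℝ)
        ≤ ENNReal.ofReal (32*C*Real.sqrt p) := by
      calc ∑ m ∈ Finset.range N, (∫⁻ ω, M m ω ^ p ∂μ) ^ (1/p : ℝ)
          ≤ ∑ m ∈ Finset.range N, ENNReal.ofReal (4*C*Real.sqrt p * r^m) :=
            Finset.sum_le_sum fun m _ => hM_bound m
        _ = ENNReal.ofReal (∑ m ∈ Finset.range N, (4*C*Real.sqrt p * r^m)) := by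
            rw [ENNReal.ofReal_sum_of_nonneg]
            intro m _
            positivity
        _ ≤ ENNReal.ofReal (32*C*Real.sqrt p) := ENNReal.ofReal_le_ofReal (hgeom N)
    calc (∫⁻ ω, T N ω ^ p ∂μ) ^ (1/p : ℝ)
        ≤ (∫⁻ ω, B ω ^ p ∂μ) ^ (1/p : ℝ)
          + ∑ m ∈ Finset.range N, (∫⁻ ω, M m ω ^ p ∂μ) ^ (1/p : ℝ) := h1
      _ ≤ (ENNReal.ofReal (C*Real.sqrt p) + ENNReal.ofReal (C*Real.sqrt p))
          + ENNReal.ofReal (32*C*Real.sqrt p) := add_le_add hB_bound h2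
      _ = ENNReal.ofReal (34*C*Real.sqrt p) := by
          rw [← ENNReal.ofReal_add (by positivity) (by positivity),
            ← ENNReal.ofReal_add (by positivity) (by positivity)]
          ring_nf
  -- conclusion
  have hfinal : ∀ N : ℕ, (∫⁻ ω, T N ω ^ p ∂μ) ≤ ENNReal.ofReal ((34*C)^p * p^(p/2)) := by
    intro N
    have e1 : (∫⁻ ω, T N ω ^ p ∂μ) = ((∫⁻ ω, T N ω ^ p ∂μ) ^ (1/p : ℝ)) ^ p := by
      rw [← ENNReal.rpow_mul, one_div, inv_mul_cancel₀ hp0.ne', ENNReal.rpow_one]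
    rw [e1]
    calc ((∫⁻ ω, T N ω ^ p ∂μ) ^ (1/p : ℝ)) ^ p
        ≤ (ENNReal.ofReal (34*C*Real.sqrt p)) ^ p :=
          ENNReal.rpow_le_rpow (normT N) hp0.le
      _ = ENNReal.ofReal ((34*C*Real.sqrt p) ^ p) :=
          ENNReal.ofReal_rpow_of_nonneg (by positivity) hp0.le
      _ = ENNReal.ofReal ((34*C)^p * p^(p/2)) := by
          congr 1
          rw [Real.mul_rpow (by positivity) (Real.sqrt_nonneg p),
            Real.sqrt_eq_rpow, ← Real.rpow_mul hp0.le]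
          ring_nf
  calc (∫⁻ ω, ENNReal.ofReal ((⨆ x ∈ dyadicSet, |X x ω|) ^ p) ∂μ)
      ≤ ∫⁻ ω, ⨆ N, (T N ω) ^ p ∂μ := lintegral_mono hSle
    _ = ⨆ N, ∫⁻ ω, (T N ω) ^ p ∂μ := by
        rw [lintegral_iSup (fun N => (hTm N).pow_const p)]
        intro N N' h ω
        exact ENNReal.rpow_le_rpow (hTmono ω h) hp0.le
    _ ≤ ENNReal.ofReal ((34*C)^p * p^(p/2)) := iSup_le hfinal
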